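/- Let d ≥ 1, ε ∈ ℝ, and let S : ℝ^d → ℝ, A : ℝ^d → ℂ be smooth (C^∞). With the operators N₂(S,A) = ( 0 , (i(ε−1)/2)ΔA ) and N₄(S,A) = ( ε²ΔS , −iε A ΔS ), and their Gateaux derivatives DN₂(S,A)·(S₀,A₀) = ( 0 , (i(ε−1)/2)ΔA₀ ) and DN₄(S,A)·(S₀,A₀) = ( ε²ΔS₀ , −iε( A₀ΔS + AΔS₀ ) ), the commutator [N₂,N₄](S,A) := DN₂(S,A)·N₄(S,A) − DN₄(S,A)·N₂(S,A) equals, at every point, ( 0 , (ε(ε−1)/2) ( A Δ²S + 2 ∇A·∇ΔS ) ). -/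

import Mathlib

noncomputable section

open Real Complex Finset

/-- Partial derivative in the `k`-th coordinate direction of a function on `ℝ^d`. -/
def pds {d : ℕ} {E : Type*} [NormedAddCommGroup E] [NormedSpace ℝ E]
    (f : (Fin d → ℝ) → E) (k : Fin d) (x : Fin d → ℝ) : E :=
  fderiv ℝ f x (Pi.single k 1)

/-- Laplacian `Δ = ∑ₖ ∂²_{x_k}` of a function on `ℝ^d`. -/
def laps {d : ℕ} {E : Type*} [NormedAddCommGroup E] [NormedSpace ℝ E]
    (f : (Fin d → ℝ) → E) (x : Fin d → ℝ) : E :=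
  ∑ k : Fin d, pds (pds f k) k x

/-- Second (amplitude) component of the operator `N₂(S,A) = (0, (i(ε−1)/2)ΔA)`;
its first component is `0`. -/
def opN2A {d : ℕ} (ε : ℝ) (A : (Fin d → ℝ) → ℂ) : (Fin d → ℝ) → ℂ :=
  fun x => Complex.I * ((ε : ℂ) - 1) / 2 * laps A x

/-- Second component of the Gateaux derivative `DN₂(S,A)·(S₀,A₀) = (0, (i(ε−1)/2)ΔA₀)`;
its first component is `0`. -/
def opDN2A {d : ℕ} (ε : ℝ) (A₀ : (Fin d → ℝ) → ℂ) : (Fin d → ℝ) → ℂ :=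
  fun x => Complex.I * ((ε : ℂ) - 1) / 2 * laps A₀ x

/-- First (phase) component of the operator `N₄(S,A) = (ε²ΔS, −iεAΔS)`. -/
def opN4S {d : ℕ} (ε : ℝ) (S : (Fin d → ℝ) → ℝ) : (Fin d → ℝ) → ℝ :=
  fun x => ε ^ 2 * laps S x

/-- Second (amplitude) component of the operator `N₄`. -/
def opN4A {d : ℕ} (ε : ℝ) (S : (Fin d → ℝ) → ℝ) (A : (Fin d → ℝ) → ℂ) : (Fin d → ℝ) → ℂ :=
  fun x => -Complex.I * (ε : ℂ) * A x * ((laps S x : ℝ) : ℂ)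

/-- First component of the Gateaux derivative `DN₄(S,A)·(S₀,A₀) = (ε²ΔS₀, −iε(A₀ΔS + AΔS₀))`. -/
def opDN4S {d : ℕ} (ε : ℝ) (S₀ : (Fin d → ℝ) → ℝ) : (Fin d → ℝ) → ℝ :=
  fun x => ε ^ 2 * laps S₀ x

/-- Second component of the Gateaux derivative `DN₄(S,A)·(S₀,A₀)`. -/
def opDN4A {d : ℕ} (ε : ℝ) (S : (Fin d → ℝ) → ℝ) (A : (Fin d → ℝ) → ℂ)
    (S₀ : (Fin d → ℝ) → ℝ) (A₀ : (Fin d → ℝ) → ℂ) : (Fin d → ℝ) → ℂ :=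
  fun x => -Complex.I * (ε : ℂ) *
    (A₀ x * ((laps S x : ℝ) : ℂ) + A x * ((laps S₀ x : ℝ) : ℂ))

section Aux

variable {d : ℕ} {E : Type*} [NormedAddCommGroup E] [NormedSpace ℝ E]

lemma diffOfTop {d : ℕ} {E : Type*} [NormedAddCommGroup E] [NormedSpace ℝ E]
    {f : (Fin d → ℝ) → E} (hf : ContDiff ℝ (⊤ : ℕ∞) f) : Differentiable ℝ f :=
  hf.differentiable (by simp)

lemma pds_contDiff {f : (Fin d → ℝ) → E} (hf : ContDiff ℝ (⊤ : ℕ∞) f) (k : Fin d) :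
    ContDiff ℝ (⊤ : ℕ∞) (pds f k) := by
  have h := (hf.fderiv_right (m := (⊤ : ℕ∞)) le_rfl)
  exact h.clm_apply contDiff_const

lemma laps_contDiff {f : (Fin d → ℝ) → E} (hf : ContDiff ℝ (⊤ : ℕ∞) f) :
    ContDiff ℝ (⊤ : ℕ∞) (laps f) := by
  have : laps f = fun x => ∑ k : Fin d, pds (pds f k) k x := rfl
  rw [this]
  exact ContDiff.sum fun k _ => pds_contDiff (pds_contDiff hf k) k

lemma pds_const (c : E) (k : Fin d) : pds (fun _ => c) k = fun _ => 0 := by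
  funext x
  simp [pds, fderiv_const]

lemma laps_const (c : E) : laps (fun (_ : Fin d → ℝ) => c) = fun _ => 0 := by
  funext x
  simp [laps, pds_const, pds, fderiv_const]

lemma pds_add {f g : (Fin d → ℝ) → E} (hf : Differentiable ℝ f) (hg : Differentiable ℝ g)
    (k : Fin d) : pds (fun x => f x + g x) k = fun x => pds f k x + pds g k x := by
  funext x
  simp [pds, fderiv_fun_add (hf x) (hg x)]

lemma pds_mul {f g : (Fin d → ℝ) → ℂ} (hf : Differentiable ℝ f) (hg : Differentiable ℝ g)
    (k : Fin d) : pds (fun x => f x * g x) k = fun x => pds f k x * g x + f x * pds g k x := by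
  funext x
  simp [pds, fderiv_fun_mul (hf x) (hg x)]
  ring

lemma pds_const_mul {f : (Fin d → ℝ) → ℂ} (hf : Differentiable ℝ f) (c : ℂ)
    (k : Fin d) : pds (fun x => c * f x) k = fun x => c * pds f k x := by
  funext x
  simp [pds, fderiv_const_mul (hf x) c]

lemma laps_const_mul {f : (Fin d → ℝ) → ℂ} (hf : ContDiff ℝ (⊤ : ℕ∞) f) (c : ℂ) :
    laps (fun x => c * f x) = fun x => c * laps f x := by
  funext x
  simp only [laps]
  rw [Finset.mul_sum]
  refine Finset.sum_congr rfl fun k _ => ?_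
  rw [pds_const_mul (diffOfTop hf) c k,
      pds_const_mul (diffOfTop (pds_contDiff hf k)) c k]

lemma pds_ofReal {g : (Fin d → ℝ) → ℝ} (hg : Differentiable ℝ g) (k : Fin d) :
    pds (fun x => ((g x : ℝ) : ℂ)) k = fun x => ((pds g k x : ℝ) : ℂ) := by
  funext x
  have : (fun x => ((g x : ℝ) : ℂ)) = Complex.ofRealCLM ∘ g := rfl
  rw [this, pds, fderiv_comp x Complex.ofRealCLM.differentiableAt (hg x),
      ContinuousLinearMap.fderiv]
  rfl

lemma laps_ofReal {g : (Fin d → ℝ) → ℝ} (hg : ContDiff ℝ (⊤ : ℕ∞) g) :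
    laps (fun x => ((g x : ℝ) : ℂ)) = fun x => ((laps g x : ℝ) : ℂ) := by
  funext x
  simp only [laps]
  push_cast
  refine Finset.sum_congr rfl fun k _ => ?_
  rw [pds_ofReal (diffOfTop hg) k,
      pds_ofReal (diffOfTop (pds_contDiff hg k)) k]

lemma laps_mul {f g : (Fin d → ℝ) → ℂ} (hf : ContDiff ℝ (⊤ : ℕ∞) f)
    (hg : ContDiff ℝ (⊤ : ℕ∞) g) (x : Fin d → ℝ) :
    laps (fun x => f x * g x) x
      = laps f x * g x + 2 * ∑ k : Fin d, pds f k x * pds g k x + f x * laps g x := by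
  have hfd := diffOfTop hf
  have hgd := diffOfTop hg
  have key : ∀ k : Fin d, pds (pds (fun x => f x * g x) k) k x
      = pds (pds f k) k x * g x + 2 * (pds f k x * pds g k x) + f x * pds (pds g k) k x := by
    intro k
    rw [pds_mul hfd hgd k]
    rw [pds_add
      (diffOfTop ((pds_contDiff hf k).mul hg))
      (diffOfTop (hf.mul (pds_contDiff hg k))) k]
    rw [pds_mul (diffOfTop (pds_contDiff hf k)) hgd k,
        pds_mul hfd (diffOfTop (pds_contDiff hg k)) k]
    ring
  simp only [laps, key]
  rw [Finset.sum_add_distrib, Finset.sum_add_distrib, ← Finset.sum_mul, ← Finset.mul_sum,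
      ← Finset.mul_sum, Finset.mul_sum]

end Aux

/-- For smooth `S : ℝ^d → ℝ` and `A : ℝ^d → ℂ`, the commutator
`[N₂,N₄](S,A) = DN₂(S,A)·N₄(S,A) − DN₄(S,A)·N₂(S,A)` equals, at every point,
`(0, (ε(ε−1)/2)(AΔ²S + 2∇A·∇ΔS))`. -/
theorem commutator_N2_N4
    (d : ℕ) (hd : 1 ≤ d) (ε : ℝ)
    (S : (Fin d → ℝ) → ℝ) (A : (Fin d → ℝ) → ℂ)
    (hS : ContDiff ℝ (⊤ : ℕ∞) S) (hA : ContDiff ℝ (⊤ : ℕ∞) A) :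
    ∀ x : Fin d → ℝ,
      (0 - opDN4S ε (fun _ => 0) x = 0)
      ∧ (opDN2A ε (opN4A ε S A) x - opDN4A ε S A (fun _ => 0) (opN2A ε A) x
          = (ε : ℂ) * ((ε : ℂ) - 1) / 2 *
              (A x * ((laps (laps S) x : ℝ) : ℂ)
                + 2 * ∑ k : Fin d, pds A k x * ((pds (laps S) k x : ℝ) : ℂ))) := by
  intro x
  constructor
  · simp [opDN4S, laps_const]
  · have hLS : ContDiff ℝ (⊤ : ℕ∞) (laps S) := laps_contDiff hS
    set G : (Fin d → ℝ) → ℂ := fun x => ((laps S x : ℝ) : ℂ) with hG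
    have hGc : ContDiff ℝ (⊤ : ℕ∞) G := Complex.ofRealCLM.contDiff.comp hLS
    have hN4A : opN4A ε S A = fun y => (-Complex.I * (ε : ℂ)) * (A y * G y) := by
      funext y; simp only [opN4A, hG]; ring
    have h1 : laps (opN4A ε S A) x = (-Complex.I * (ε : ℂ)) * laps (fun y => A y * G y) x := by
      rw [hN4A, laps_const_mul (hA.mul hGc)]
    have h2 := laps_mul hA hGc x
    have hGlaps : laps G x = ((laps (laps S) x : ℝ) : ℂ) := by
      rw [hG, laps_ofReal hLS]
    have hGpds : ∀ k, pds G k x = ((pds (laps S) k x : ℝ) : ℂ) := fun k => by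
      rw [hG, pds_ofReal (diffOfTop hLS) k]
    have hz : laps (fun _ : Fin d → ℝ => (0 : ℝ)) x = 0 := by
      rw [laps_const]
    simp only [opDN2A, opDN4A, opN2A, hz]
    rw [h1, h2, hGlaps]
    simp only [hGpds]
    simp only [hGpds, hG, Complex.ofReal_zero, mul_zero, add_zero]
    ring_nf
    rw [Complex.I_sq]
    ring
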